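/- arXiv:2212.13974 — 2 statements merged into one kernel-verified Lean document; each statement's English description precedes it below -/
import Mathlib

section
/- Let n, K, d ≥ 1, γ > 0, α ≥ 0, let x_1, …, x_n ∈ ℝ^d and D_1, …, D_K ∈ ℝ^d be fixed, and set d_{ik} = ‖x_i − D_k‖^2. Let Ω = {μ ∈ ℝ^{n×K} : μ_{ik} ≥ 0, ∑_k μ_{ik} = 1 for all i}, and define F(μ) = ∑_{i,k} μ_{ik} d_{ik} + α ∑_k q_k log q_k + γ ∑_{i,k} μ_{ik} log μ_{ik}, where q_k = (1/n) ∑_i μ_{ik} (convention 0·log 0 = 0). If μ* ∈ Ω has all entries strictly positive and is a local minimizer of F on Ω, then for all i, k: μ*_{ik} = exp(−(1/γ)(d_{ik} + (α/n)(1 + log q*_k))) / ∑_{k'} exp(−(1/γ)(d_{ik'} + (α/n)(1 + log q*_{k'}))), where q*_k = (1/n) ∑_i μ*_{ik}. -/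
lemma softmax_of_foc {K : ℕ} (hK : 1 ≤ K) (γ : ℝ) (hγ : 0 < γ) (h : Fin K → ℝ) (μ : Fin K → ℝ)
    (hpos : ∀ k, 0 < μ k) (hsum : ∑ k, μ k = 1)
    (foc : ∀ k k', h k + γ * Real.log (μ k) = h k' + γ * Real.log (μ k')) :
    ∀ k, μ k = Real.exp (-(1/γ) * h k) / ∑ k', Real.exp (-(1/γ) * h k') := by
  have k0 : Fin K := ⟨0, hK⟩
  set C : ℝ := Real.exp (Real.log (μ k0) + h k0 / γ) with hC
  have key : ∀ k, μ k = C * Real.exp (-(1/γ) * h k) := by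
    intro k
    have hfoc := foc k k0
    have hlog : Real.log (μ k) = Real.log (μ k0) + (h k0 - h k) / γ := by
      field_simp at hfoc ⊢
      linarith
    have : μ k = Real.exp (Real.log (μ k)) := (Real.exp_log (hpos k)).symm
    rw [this, hlog, hC, ← Real.exp_add]
    ring_nf
  have hS : (0:ℝ) < ∑ k', Real.exp (-(1/γ) * h k') :=
    Finset.sum_pos (fun k _ => Real.exp_pos _) ⟨k0, Finset.mem_univ _⟩
  have hCS : C * ∑ k', Real.exp (-(1/γ) * h k') = 1 := by
    rw [Finset.mul_sum]
    calc ∑ k, C * Real.exp (-(1/γ) * h k) = ∑ k, μ k :=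
          Finset.sum_congr rfl (fun k _ => (key k).symm)
      _ = 1 := hsum
  have hCeq : C = 1 / ∑ k', Real.exp (-(1/γ) * h k') := by
    rw [eq_div_iff hS.ne']; exact hCS
  intro k
  rw [key k, hCeq]; ring

lemma hasDerivAt_affine_comp {g : ℝ → ℝ} {g' a b : ℝ} (hg : HasDerivAt g g' a) :
    HasDerivAt (fun t => g (a + t * b)) (b * g') 0 := by
  have h1 : HasDerivAt (fun t : ℝ => a + t * b) b 0 := by
    simpa using ((hasDerivAt_id (0:ℝ)).mul_const b).const_add a
  have hg' : HasDerivAt g g' (a + 0 * b) := by simpa using hg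
  simpa [mul_comm, Function.comp_def] using hg'.comp 0 h1

lemma deriv_F {n K : ℕ} (hn : 1 ≤ n) (γ α : ℝ) (dst : Fin n → Fin K → ℝ)
    (μs v : Fin n → Fin K → ℝ) (hpos : ∀ i k, 0 < μs i k) :
    HasDerivAt (fun t =>
      (∑ i, ∑ k, (μs i k + t * v i k) * dst i k)
      + α * ∑ k, ((1/(n:ℝ)) * ∑ i, (μs i k + t * v i k)) *
          Real.log ((1/(n:ℝ)) * ∑ i, (μs i k + t * v i k))
      + γ * ∑ i, ∑ k, (μs i k + t * v i k) * Real.log (μs i k + t * v i k))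
    ((∑ i, ∑ k, v i k * dst i k)
      + α * ∑ k, ((1/(n:ℝ)) * ∑ i, v i k) * (Real.log ((1/(n:ℝ)) * ∑ i, μs i k) + 1)
      + γ * ∑ i, ∑ k, v i k * (Real.log (μs i k) + 1)) 0 := by
  have hA : HasDerivAt (fun t : ℝ => ∑ i, ∑ k, (μs i k + t * v i k) * dst i k)
      (∑ i, ∑ k, v i k * dst i k) 0 := by
    apply HasDerivAt.fun_sum; intro i _
    apply HasDerivAt.fun_sum; intro k _
    have := hasDerivAt_affine_comp (g := fun s => s * dst i k)
      (a := μs i k) (b := v i k) ((hasDerivAt_id (μs i k)).mul_const (dst i k))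
    simpa using this
  have hB : HasDerivAt (fun t : ℝ => ∑ k, ((1/(n:ℝ)) * ∑ i, (μs i k + t * v i k)) *
        Real.log ((1/(n:ℝ)) * ∑ i, (μs i k + t * v i k)))
      (∑ k, ((1/(n:ℝ)) * ∑ i, v i k) * (Real.log ((1/(n:ℝ)) * ∑ i, μs i k) + 1)) 0 := by
    apply HasDerivAt.fun_sum; intro k _
    have hq : (0:ℝ) < (1/(n:ℝ)) * ∑ i, μs i k := by
      apply mul_pos (by positivity)
      exact Finset.sum_pos (fun i _ => hpos i k) ⟨⟨0, hn⟩, Finset.mem_univ _⟩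
    have heq : (fun t : ℝ => ((1/(n:ℝ)) * ∑ i, (μs i k + t * v i k)) *
        Real.log ((1/(n:ℝ)) * ∑ i, (μs i k + t * v i k)))
        = fun t : ℝ => (fun s => s * Real.log s)
            (((1/(n:ℝ)) * ∑ i, μs i k) + t * ((1/(n:ℝ)) * ∑ i, v i k)) := by
      funext t
      have : (1/(n:ℝ)) * ∑ i, (μs i k + t * v i k)
          = ((1/(n:ℝ)) * ∑ i, μs i k) + t * ((1/(n:ℝ)) * ∑ i, v i k) := by
        rw [Finset.sum_add_distrib, ← Finset.mul_sum]; ring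
      rw [this]
    rw [heq]
    have := hasDerivAt_affine_comp (a := (1/(n:ℝ)) * ∑ i, μs i k)
      (b := (1/(n:ℝ)) * ∑ i, v i k) (Real.hasDerivAt_mul_log hq.ne')
    simpa using this
  have hC : HasDerivAt (fun t : ℝ => ∑ i, ∑ k, (μs i k + t * v i k) * Real.log (μs i k + t * v i k))
      (∑ i, ∑ k, v i k * (Real.log (μs i k) + 1)) 0 := by
    apply HasDerivAt.fun_sum; intro i _
    apply HasDerivAt.fun_sum; intro k _
    exact hasDerivAt_affine_comp (Real.hasDerivAt_mul_log (hpos i k).ne')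
  exact (hA.add (hB.const_mul α)).add (hC.const_mul γ)

/-- First-order optimality for the early-model membership objective: an interior
local minimizer over the row-stochastic matrices satisfies the softmax fixed-point
formula of Proposition 1 (Eq. (1)). -/
theorem stmt_7 (n K d : ℕ) (hn : 1 ≤ n) (hK : 1 ≤ K) (hd : 1 ≤ d)
    (γ α : ℝ) (hγ : 0 < γ) (hα : 0 ≤ α)
    (x : Fin n → EuclideanSpace ℝ (Fin d)) (D : Fin K → EuclideanSpace ℝ (Fin d)) :
    let dst : Fin n → Fin K → ℝ := fun i k => ‖x i - D k‖ ^ 2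
    let Ω : Set (Fin n → Fin K → ℝ) := {μ | (∀ i k, 0 ≤ μ i k) ∧ ∀ i, ∑ k, μ i k = 1}
    let F : (Fin n → Fin K → ℝ) → ℝ := fun μ =>
      (∑ i, ∑ k, μ i k * dst i k)
      + α * ∑ k, ((1 / (n : ℝ)) * ∑ i, μ i k) * Real.log ((1 / (n : ℝ)) * ∑ i, μ i k)
      + γ * ∑ i, ∑ k, μ i k * Real.log (μ i k)
    ∀ μs ∈ Ω, (∀ i k, 0 < μs i k) → IsLocalMinOn F Ω μs →
      ∀ i k, μs i k =
        Real.exp (-(1 / γ) * (dst i k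
            + (α / n) * (1 + Real.log ((1 / (n : ℝ)) * ∑ i', μs i' k)))) /
        ∑ k', Real.exp (-(1 / γ) * (dst i k'
            + (α / n) * (1 + Real.log ((1 / (n : ℝ)) * ∑ i', μs i' k')))) := by
  intro dst Ω F μs hμΩ hpos hmin i
  -- abbreviations
  set q : Fin K → ℝ := fun k => (1/(n:ℝ)) * ∑ i', μs i' k with hq
  set h : Fin K → ℝ := fun k => dst i k + (α / n) * (1 + Real.log (q k)) with hh
  -- first-order conditions
  have foc : ∀ k k', h k + γ * Real.log (μs i k) = h k' + γ * Real.log (μs i k') := by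
    intro k k1
    rcases eq_or_ne k k1 with rfl | hkk
    · rfl
    -- perturbation direction
    set v : Fin n → Fin K → ℝ := fun i' k'' =>
      (if i' = i ∧ k'' = k then (1:ℝ) else 0) - (if i' = i ∧ k'' = k1 then 1 else 0) with hv
    have hvbd : ∀ i' k'', |v i' k''| ≤ 1 := by
      intro i' k''; simp only [hv]; split_ifs <;> norm_num
    have hvrow : ∀ i', ∑ k'', v i' k'' = 0 := by
      intro i'
      simp [hv, Finset.sum_sub_distrib, ite_and]
    -- path
    set p : ℝ → (Fin n → Fin K → ℝ) := fun t i' k'' => μs i' k'' + t * v i' k'' with hp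
    have hp0 : p 0 = μs := by funext i' k''; simp [hp]
    -- a positive lower bound on entries
    obtain ⟨δ, hδpos, hδle⟩ : ∃ δ > 0, ∀ i' k'', δ ≤ μs i' k'' := by
      obtain ⟨⟨i0, k0⟩, -, hmin'⟩ :=
        Finset.exists_min_image (Finset.univ : Finset (Fin n × Fin K))
          (fun z => μs z.1 z.2) ⟨⟨⟨0, hn⟩, ⟨0, hK⟩⟩, Finset.mem_univ _⟩
      exact ⟨μs i0 k0, hpos i0 k0, fun i' k'' => hmin' ⟨i', k''⟩ (Finset.mem_univ _)⟩
    -- path stays in Ω for small t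
    have hpΩ : ∀ t : ℝ, |t| ≤ δ → p t ∈ Ω := by
      intro t ht
      constructor
      · intro i' k''
        have h1 : |t * v i' k''| ≤ δ := by
          calc |t * v i' k''| = |t| * |v i' k''| := abs_mul _ _
            _ ≤ δ * 1 := mul_le_mul ht (hvbd i' k'') (abs_nonneg _) hδpos.le
            _ = δ := mul_one _
        have h2 := (abs_le.mp h1).1
        have := hδle i' k''
        simp only [hp]; linarith
      · intro i'
        simp only [hp]
        rw [Finset.sum_add_distrib, ← Finset.mul_sum, hvrow, hμΩ.2 i']
        ring
    -- φ has a local min at 0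
    have hcont : Continuous p := by
      apply continuous_pi; intro i'; apply continuous_pi; intro k''
      exact continuous_const.add (continuous_id.mul continuous_const)
    have hlocmin : IsLocalMin (fun t => F (p t)) 0 := by
      have hmem : {ν | F μs ≤ F ν} ∈ nhdsWithin μs Ω := hmin
      rw [mem_nhdsWithin] at hmem
      obtain ⟨U, hUopen, hUmem, hUsub⟩ := hmem
      have h1 : p ⁻¹' U ∈ nhds (0:ℝ) := by
        apply ContinuousAt.preimage_mem_nhds hcont.continuousAt
        rw [hp0]; exact hUopen.mem_nhds hUmem
      have h2 : Metric.closedBall (0:ℝ) δ ∈ nhds (0:ℝ) := Metric.closedBall_mem_nhds 0 hδpos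
      filter_upwards [h1, h2] with t htU htδ
      have htδ' : |t| ≤ δ := by simpa [Real.dist_eq] using htδ
      have : F μs ≤ F (p t) := hUsub ⟨htU, hpΩ t htδ'⟩
      simpa [hp0] using this
    -- derivative is zero
    have hder := deriv_F hn γ α (fun i' k'' => dst i' k'') μs v hpos
    have hFeq : (fun t => F (p t)) = (fun t =>
      (∑ i', ∑ k'', (μs i' k'' + t * v i' k'') * dst i' k'')
      + α * ∑ k'', ((1/(n:ℝ)) * ∑ i', (μs i' k'' + t * v i' k'')) *
          Real.log ((1/(n:ℝ)) * ∑ i', (μs i' k'' + t * v i' k''))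
      + γ * ∑ i', ∑ k'', (μs i' k'' + t * v i' k'') * Real.log (μs i' k'' + t * v i' k'')) := by
      rfl
    have hder' : HasDerivAt (fun t => F (p t))
      ((∑ i', ∑ k'', v i' k'' * dst i' k'')
      + α * ∑ k'', ((1/(n:ℝ)) * ∑ i', v i' k'') * (Real.log ((1/(n:ℝ)) * ∑ i', μs i' k'') + 1)
      + γ * ∑ i', ∑ k'', v i' k'' * (Real.log (μs i' k'') + 1)) 0 := by
      rw [hFeq]; exact hder
    have hzero := hlocmin.deriv_eq_zero
    rw [hder'.deriv] at hzero
    -- simplify sums in hzero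
    have e1 : ∑ i', ∑ k'', v i' k'' * dst i' k'' = dst i k - dst i k1 := by
      simp [hv, sub_mul, ite_mul, Finset.sum_sub_distrib, ite_and]
    have e2 : ∀ c : Fin K → ℝ, ∑ k'', ((1/(n:ℝ)) * ∑ i', v i' k'') * c k''
        = (1/(n:ℝ)) * c k - (1/(n:ℝ)) * c k1 := by
      intro c
      have : ∀ k'', ∑ i', v i' k'' = (if k'' = k then (1:ℝ) else 0) - (if k'' = k1 then 1 else 0) := by
        intro k''
        simp [hv, Finset.sum_sub_distrib, ite_and]
      calc ∑ k'', ((1/(n:ℝ)) * ∑ i', v i' k'') * c k''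
          = ∑ k'', ((if k'' = k then (1/(n:ℝ)) * c k'' else 0)
              - (if k'' = k1 then (1/(n:ℝ)) * c k'' else 0)) := by
            refine Finset.sum_congr rfl fun k'' _ => ?_
            rw [this k'']
            split_ifs <;> ring
        _ = (1/(n:ℝ)) * c k - (1/(n:ℝ)) * c k1 := by
            simp [Finset.sum_sub_distrib]
    have e3 : ∑ i', ∑ k'', v i' k'' * (Real.log (μs i' k'') + 1)
        = (Real.log (μs i k) + 1) - (Real.log (μs i k1) + 1) := by
      simp [hv, sub_mul, ite_mul, Finset.sum_sub_distrib, ite_and]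
    rw [e1, e2, e3] at hzero
    -- conclude FOC
    simp only [hh, hq]
    have hn0 : (n:ℝ) ≠ 0 := by positivity
    field_simp at hzero ⊢
    ring_nf at hzero ⊢
    linarith
  -- apply softmax lemma
  have hrow : ∑ k, μs i k = 1 := hμΩ.2 i
  have := softmax_of_foc hK γ hγ h (fun k => μs i k) (fun k => hpos i k) hrow foc
  intro k
  exact this k
end

section
/- Let n, K, d ≥ 1, γ > 0, α ≥ 0, let x_1, …, x_n ∈ ℝ^d and D_1, …, D_K ∈ ℝ^d be fixed, and set d_{ik} = ‖x_i − D_k‖^2. Let Ω = {μ ∈ ℝ^{n×K} : μ_{ik} ≥ 0, ∑_k μ_{ik} = 1 for all i}, and define F(μ) = ∑_{i,k} μ_{ik} d_{ik} + (α/2) ∑_k (q_k − 1/K)^2 + γ ∑_{i,k} μ_{ik} log μ_{ik}, where q_k = (1/n) ∑_i μ_{ik} (convention 0·log 0 = 0). If μ* ∈ Ω has all entries strictly positive and is a local minimizer of F on Ω, then for all i, k: μ*_{ik} = exp(−(1/γ)(d_{ik} + (α/n)(q*_k − 1/K))) / ∑_{k'} exp(−(1/γ)(d_{ik'} + (α/n)(q*_{k'}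 − 1/K))), where q*_k = (1/n) ∑_i μ*_{ik}. -/
private lemma hderiv_affine (a b : ℝ) : HasDerivAt (fun t : ℝ => a + t * b) b 0 := by
  simpa using ((hasDerivAt_id (0:ℝ)).mul_const b).const_add a

private lemma hderiv_xlogx (a b : ℝ) (ha : 0 < a) :
    HasDerivAt (fun t : ℝ => (a + t * b) * Real.log (a + t * b)) (b * (Real.log a + 1)) 0 := by
  have h1 : HasDerivAt (fun t : ℝ => a + t * b) b 0 := hderiv_affine a b
  have h2 : HasDerivAt (fun x : ℝ => x * Real.log x) (Real.log a + 1) (a + 0 * b) := by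
    simpa using Real.hasDerivAt_mul_log ha.ne'
  have h3 := h2.comp 0 h1
  rw [mul_comm b]
  exact h3

private lemma sum_two_point {n K : ℕ} (i : Fin n) (k₁ k₂ : Fin K) (g : Fin n → Fin K → ℝ) :
    ∑ i', ∑ m, ((if i' = i then ((if m = k₁ then (1:ℝ) else 0) - (if m = k₂ then 1 else 0)) else 0) * g i' m)
      = g i k₁ - g i k₂ := by
  rw [Finset.sum_eq_single i]
  · simp [sub_mul, ite_mul, Finset.sum_sub_distrib, Finset.sum_ite_eq']
  · intro b _ hb; simp [hb]
  · simp

/-- First-order optimality for the surrogate-model membership objective: an interior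
local minimizer over the row-stochastic matrices satisfies the softmax fixed-point
formula of Proposition 1 (Eq. (2)). -/
theorem stmt_8 (n K d : ℕ) (hn : 1 ≤ n) (hK : 1 ≤ K) (hd : 1 ≤ d)
    (γ α : ℝ) (hγ : 0 < γ) (hα : 0 ≤ α)
    (x : Fin n → EuclideanSpace ℝ (Fin d)) (D : Fin K → EuclideanSpace ℝ (Fin d)) :
    let dst : Fin n → Fin K → ℝ := fun i k => ‖x i - D k‖ ^ 2
    let Ω : Set (Fin n → Fin K → ℝ) := {μ | (∀ i k, 0 ≤ μ i k) ∧ ∀ i, ∑ k, μ i k = 1}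
    let F : (Fin n → Fin K → ℝ) → ℝ := fun μ =>
      (∑ i, ∑ k, μ i k * dst i k)
      + (α / 2) * ∑ k, ((1 / (n : ℝ)) * ∑ i, μ i k - 1 / (K : ℝ)) ^ 2
      + γ * ∑ i, ∑ k, μ i k * Real.log (μ i k)
    ∀ μs ∈ Ω, (∀ i k, 0 < μs i k) → IsLocalMinOn F Ω μs →
      ∀ i k, μs i k =
        Real.exp (-(1 / γ) * (dst i k
            + (α / n) * ((1 / (n : ℝ)) * (∑ i', μs i' k) - 1 / (K : ℝ)))) /
        ∑ k', Real.exp (-(1 / γ) * (dst i k'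
            + (α / n) * ((1 / (n : ℝ)) * (∑ i', μs i' k') - 1 / (K : ℝ)))) := by
  intro dst Ω F μs hΩ hpos hmin i k
  have hnn : ∀ i' m, 0 ≤ μs i' m := hΩ.1
  have hrow : ∀ i', ∑ m, μs i' m = 1 := hΩ.2
  -- Key first-order condition: the Lagrangian quantity is constant along row i.
  have key : ∀ k₁ k₂ : Fin K,
      γ * Real.log (μs i k₁)
        + (dst i k₁ + (α / n) * ((1/(n:ℝ)) * (∑ i', μs i' k₁) - 1/(K:ℝ)))
      = γ * Real.log (μs i k₂)
        + (dst i k₂ + (α / n) * ((1/(n:ℝ)) * (∑ i', μs i' k₂) - 1/(K:ℝ))) := by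
    intro k₁ k₂
    rcases eq_or_ne k₁ k₂ with h | hkk
    · rw [h]
    set v : Fin n → Fin K → ℝ := fun i' m =>
      if i' = i then ((if m = k₁ then (1:ℝ) else 0) - (if m = k₂ then 1 else 0)) else 0 with hv
    set p : ℝ → Fin n → Fin K → ℝ := fun t i' m => μs i' m + t * v i' m with hp
    have hp0 : p 0 = μs := by funext i' m; simp [hp]
    set ε : ℝ := min (μs i k₁) (μs i k₂) with hε
    have hεpos : 0 < ε := lt_min (hpos i k₁) (hpos i k₂)
    have hmem : ∀ t : ℝ, |t| < ε → p t ∈ Ω := by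
      intro t ht
      obtain ⟨ht1, ht2⟩ := abs_lt.mp ht
      constructor
      · intro i' m
        by_cases hi : i' = i
        · subst hi
          by_cases h1 : m = k₁
          · subst h1
            have h2 : ε ≤ μs i' m := min_le_left _ _
            have hne : m ≠ k₂ := fun hc => hkk hc
            have hpe : p t i' m = μs i' m + t := by simp [hp, hv, hne]
            rw [hpe]; linarith
          · by_cases h2 : m = k₂
            · subst h2
              have h3 : ε ≤ μs i' m := min_le_right _ _
              have hpe : p t i' m = μs i' m - t := by simp [hp, hv, h1]; ring
              rw [hpe]; linarith
            · simp [hp, hv, h1, h2, hnn i' m]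
        · simp [hp, hv, hi, hnn i' m]
      · intro i'
        have h0 : ∑ m, v i' m = 0 := by
          by_cases hi : i' = i
          · simp [hv, hi, Finset.sum_sub_distrib, Finset.sum_ite_eq', hkk]
          · simp [hv, hi]
        simp [hp, Finset.sum_add_distrib, ← Finset.mul_sum, h0, hrow i']
    -- local minimum along the segment
    have hcontp : Continuous p := by
      apply continuous_pi; intro i'; apply continuous_pi; intro m
      exact continuous_const.add (continuous_id.mul continuous_const)
    have htend : Filter.Tendsto p (nhds 0) (nhdsWithin μs Ω) := by
      rw [tendsto_nhdsWithin_iff]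
      constructor
      · simpa [hp0] using hcontp.tendsto 0
      · have hball : ∀ᶠ t in nhds (0:ℝ), |t| < ε := by
          have := Metric.ball_mem_nhds (0:ℝ) hεpos
          filter_upwards [this] with t ht
          simpa [Real.dist_eq] using ht
        exact hball.mono fun t ht => hmem t ht
    have hloc : IsLocalMin (fun t => F (p t)) 0 := by
      have hev : ∀ᶠ t in nhds (0:ℝ), F μs ≤ F (p t) := htend.eventually hmin
      refine hev.mono fun t ht => ?_
      simpa [hp0] using ht
    -- derivative of F ∘ p at 0
    have hA : HasDerivAt (fun t => ∑ i', ∑ m, p t i' m * dst i' m)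
        (∑ i', ∑ m, v i' m * dst i' m) 0 := by
      apply HasDerivAt.fun_sum; intro i' _
      apply HasDerivAt.fun_sum; intro m _
      exact (hderiv_affine (μs i' m) (v i' m)).mul_const (dst i' m)
    have hB : HasDerivAt
        (fun t => (α/2) * ∑ m, ((1/(n:ℝ)) * ∑ i', p t i' m - 1/(K:ℝ))^2)
        ((α/2) * ∑ m, (2 * ((1/(n:ℝ)) * (∑ i', μs i' m) - 1/(K:ℝ))
            * ((1/(n:ℝ)) * ∑ i', v i' m))) 0 := by
      apply HasDerivAt.const_mul
      apply HasDerivAt.fun_sum; intro m _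
      have heq : (fun t : ℝ => (1/(n:ℝ)) * ∑ i', p t i' m - 1/(K:ℝ))
          = fun t : ℝ => ((1/(n:ℝ)) * ((∑ i', μs i' m) + t * ∑ i', v i' m) - 1/(K:ℝ)) := by
        funext t
        show (1/(n:ℝ)) * ∑ i', (μs i' m + t * v i' m) - 1/(K:ℝ) = _
        rw [Finset.sum_add_distrib, ← Finset.mul_sum]
      have h1 : HasDerivAt (fun t : ℝ => (1/(n:ℝ)) * ∑ i', p t i' m - 1/(K:ℝ))
          ((1/(n:ℝ)) * ∑ i', v i' m) 0 := by
        rw [heq]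
        exact ((hderiv_affine _ _).const_mul _).sub_const _
      have h2 := h1.fun_pow 2
      have hp0' : ∀ i'', p 0 i'' m = μs i'' m := fun i'' => by simp [hp]
      refine h2.congr_deriv ?_
      simp [hp0']
    have hC : HasDerivAt (fun t => γ * ∑ i', ∑ m, p t i' m * Real.log (p t i' m))
        (γ * ∑ i', ∑ m, v i' m * (Real.log (μs i' m) + 1)) 0 := by
      apply HasDerivAt.const_mul
      apply HasDerivAt.fun_sum; intro i' _
      apply HasDerivAt.fun_sum; intro m _
      exact hderiv_xlogx (μs i' m) (v i' m) (hpos i' m)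
    have hF : HasDerivAt (fun t => F (p t))
        ((∑ i', ∑ m, v i' m * dst i' m)
          + (α/2) * ∑ m, (2 * ((1/(n:ℝ)) * (∑ i', μs i' m) - 1/(K:ℝ))
              * ((1/(n:ℝ)) * ∑ i', v i' m))
          + γ * ∑ i', ∑ m, v i' m * (Real.log (μs i' m) + 1)) 0 :=
      (hA.add hB).add hC
    have hval := hloc.hasDerivAt_eq_zero hF
    -- simplify the three sums
    have e1 : ∑ i', ∑ m, v i' m * dst i' m = dst i k₁ - dst i k₂ := by
      simpa only [hv] using sum_two_point i k₁ k₂ dst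
    have e3 : ∑ i', ∑ m, v i' m * (Real.log (μs i' m) + 1)
        = (Real.log (μs i k₁) + 1) - (Real.log (μs i k₂) + 1) := by
      simpa only [hv] using sum_two_point i k₁ k₂ (fun i' m => Real.log (μs i' m) + 1)
    have e2 : ∀ m : Fin K, ∑ i', v i' m
        = (if m = k₁ then (1:ℝ) else 0) - (if m = k₂ then 1 else 0) := by
      intro m; simp [hv, Finset.sum_ite_eq']
    have e2' : (α/2) * ∑ m, (2 * ((1/(n:ℝ)) * (∑ i', μs i' m) - 1/(K:ℝ))
            * ((1/(n:ℝ)) * ∑ i', v i' m))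
        = (α/n) * ((1/(n:ℝ)) * (∑ i', μs i' k₁) - 1/(K:ℝ))
          - (α/n) * ((1/(n:ℝ)) * (∑ i', μs i' k₂) - 1/(K:ℝ)) := by
      simp only [e2, mul_sub, mul_ite, mul_one, mul_zero, Finset.sum_sub_distrib,
        Finset.sum_ite_eq', Finset.mem_univ, if_true]
      ring
    rw [e1, e2', e3] at hval
    linear_combination hval
  -- From the constant Lagrangian quantity, derive the softmax formula.
  obtain ⟨L, hL⟩ : ∃ L : ℝ, ∀ m : Fin K,
      γ * Real.log (μs i m)
        + (dst i m + (α / n) * ((1/(n:ℝ)) * (∑ i', μs i' m) - 1/(K:ℝ))) = L :=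
    ⟨_, fun m => key m k⟩
  have hrepr : ∀ m : Fin K, μs i m = Real.exp (L/γ) *
      Real.exp (-(1/γ) * (dst i m + (α / n) * ((1/(n:ℝ)) * (∑ i', μs i' m) - 1/(K:ℝ)))) := by
    intro m
    have h1 := hL m
    set c := dst i m + (α / n) * ((1/(n:ℝ)) * (∑ i', μs i' m) - 1/(K:ℝ)) with hcdef
    have h2 : Real.log (μs i m) = L/γ + -(1/γ) * c := by
      field_simp
      linarith
    rw [← Real.exp_log (hpos i m), h2, Real.exp_add]
  have hSpos : 0 < ∑ k', Real.exp (-(1 / γ) * (dst i k'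
      + (α / n) * ((1 / (n : ℝ)) * (∑ i', μs i' k') - 1 / (K : ℝ)))) := by
    have : Nonempty (Fin K) := ⟨⟨0, hK⟩⟩
    exact Finset.sum_pos (fun _ _ => Real.exp_pos _) Finset.univ_nonempty
  have hone : Real.exp (L/γ) * ∑ k', Real.exp (-(1 / γ) * (dst i k'
      + (α / n) * ((1 / (n : ℝ)) * (∑ i', μs i' k') - 1 / (K : ℝ)))) = 1 := by
    rw [Finset.mul_sum]
    calc (∑ k', Real.exp (L/γ) * Real.exp (-(1 / γ) * (dst i k'
          + (α / n) * ((1 / (n : ℝ)) * (∑ i', μs i' k') - 1 / (K : ℝ)))))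
        = ∑ k', μs i k' := Finset.sum_congr rfl fun m _ => (hrepr m).symm
      _ = 1 := hrow i
  rw [eq_div_iff hSpos.ne', hrepr k]
  linear_combination (Real.exp (-(1 / γ) * (dst i k
      + (α / n) * ((1 / (n : ℝ)) * (∑ i', μs i' k) - 1 / (K : ℝ))))) * hone
end
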